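/- arXiv:1205.1882 — 2 statements merged into one kernel-verified Lean document; each statement's English description precedes it below -/
import Mathlib

section
/- There exists an optimal solution of the 1-center 1-freeway problem in which the facility point lies on the freeway segment: for any finite S ⊆ ℝ², v > 1, and ℓ > 0, the infimum of max_{p∈S} d_h(p,f) over all facilities f and segments h of length ℓ is attained by some pair (f,h) with f ∈ h. -/
noncomputable def n1 (p : ℝ × ℝ) : ℝ := |p.1| + |p.2|
noncomputable def n2 (p : ℝ × ℝ) : ℝ := Real.sqrt (p.1 ^ 2 + p.2 ^ 2)

noncomputable def dfree (a b : ℝ × ℝ) (v : ℝ) (p f : ℝ × ℝ) : ℝ :=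
  min (n1 (p - f))
    (sInf {c : ℝ | ∃ q₁ ∈ segment ℝ a b, ∃ q₂ ∈ segment ℝ a b,
      c = n1 (p - q₁) + n2 (q₁ - q₂) / v + n1 (q₂ - f)})

/-! ### Basic facts about `n1` and `n2` -/

lemma n1_nonneg (x : ℝ × ℝ) : 0 ≤ n1 x := add_nonneg (abs_nonneg _) (abs_nonneg _)

lemma n1_zero : n1 (0 : ℝ × ℝ) = 0 := by simp [n1]

lemma n1_triangle (x y : ℝ × ℝ) : n1 (x + y) ≤ n1 x + n1 y := by
  have h1 := abs_add_le x.1 y.1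
  have h2 := abs_add_le x.2 y.2
  simp only [n1, Prod.fst_add, Prod.snd_add]
  linarith

lemma n1_smul (c : ℝ) (x : ℝ × ℝ) : n1 (c • x) = |c| * n1 x := by
  simp [n1, Prod.smul_fst, Prod.smul_snd, smul_eq_mul, abs_mul, mul_add]

lemma n1_neg (x : ℝ × ℝ) : n1 (-x) = n1 x := by simp [n1]

lemma n2_eq_abs (x : ℝ × ℝ) : n2 x = ‖(⟨x.1, x.2⟩ : ℂ)‖ := by
  rw [n2, Complex.norm_def, Complex.normSq_mk]
  congr 1
  ring

lemma n2_nonneg (x : ℝ × ℝ) : 0 ≤ n2 x := Real.sqrt_nonneg _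

lemma n2_zero : n2 (0 : ℝ × ℝ) = 0 := by simp [n2]

lemma n2_triangle (x y : ℝ × ℝ) : n2 (x + y) ≤ n2 x + n2 y := by
  rw [n2_eq_abs, n2_eq_abs, n2_eq_abs]
  have : (⟨(x + y).1, (x + y).2⟩ : ℂ) = ⟨x.1, x.2⟩ + ⟨y.1, y.2⟩ := by
    apply Complex.ext <;> simp
  rw [this]
  exact norm_add_le _ _

lemma n2_smul (c : ℝ) (x : ℝ × ℝ) : n2 (c • x) = |c| * n2 x := by
  rw [n2_eq_abs, n2_eq_abs]
  have : (⟨(c • x).1, (c • x).2⟩ : ℂ) = (c : ℂ) * ⟨x.1, x.2⟩ := by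
    apply Complex.ext <;> simp [Complex.mul_re, Complex.mul_im]
  rw [this, norm_mul, Complex.norm_real, Real.norm_eq_abs]

lemma n2_le_n1 (x : ℝ × ℝ) : n2 x ≤ n1 x := by
  rw [n2_eq_abs]
  exact Complex.norm_le_abs_re_add_abs_im _

lemma abs_fst_le_n2 (x : ℝ × ℝ) : |x.1| ≤ n2 x := by
  rw [n2_eq_abs]; exact Complex.abs_re_le_norm ⟨x.1, x.2⟩

lemma abs_snd_le_n2 (x : ℝ × ℝ) : |x.2| ≤ n2 x := by
  rw [n2_eq_abs]; exact Complex.abs_im_le_norm ⟨x.1, x.2⟩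

lemma dist_le_n2 (x y : ℝ × ℝ) : dist x y ≤ n2 (x - y) := by
  rw [Prod.dist_eq]
  apply max_le
  · rw [Real.dist_eq]
    exact abs_fst_le_n2 (x - y)
  · rw [Real.dist_eq]
    exact abs_snd_le_n2 (x - y)

lemma n1_le_two_dist (x y : ℝ × ℝ) : n1 (x - y) ≤ 2 * dist x y := by
  rw [Prod.dist_eq, n1]
  have h1 : |(x - y).1| = dist x.1 y.1 := by rw [Real.dist_eq]; rfl
  have h2 : |(x - y).2| = dist x.2 y.2 := by rw [Real.dist_eq]; rfl
  rw [h1, h2]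
  have := le_max_left (dist x.1 y.1) (dist x.2 y.2)
  have := le_max_right (dist x.1 y.1) (dist x.2 y.2)
  linarith

/-! ### Basic facts about `dfree` -/

/-- The path-cost set appearing in `dfree`. -/
def PS (a b : ℝ × ℝ) (v : ℝ) (p f : ℝ × ℝ) : Set ℝ :=
  {c : ℝ | ∃ q₁ ∈ segment ℝ a b, ∃ q₂ ∈ segment ℝ a b,
      c = n1 (p - q₁) + n2 (q₁ - q₂) / v + n1 (q₂ - f)}

lemma dfree_eq (a b : ℝ × ℝ) (v : ℝ) (p f : ℝ × ℝ) :
    dfree a b v p f = min (n1 (p - f)) (sInf (PS a b v p f)) := rfl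

lemma PS_nonempty (a b : ℝ × ℝ) (v : ℝ) (p f : ℝ × ℝ) : (PS a b v p f).Nonempty :=
  ⟨n1 (p - a) + n2 (a - a) / v + n1 (a - f),
    a, left_mem_segment ℝ a b, a, left_mem_segment ℝ a b, rfl⟩

lemma PS_bddBelow (a b : ℝ × ℝ) {v : ℝ} (hv : 0 < v) (p f : ℝ × ℝ) :
    BddBelow (PS a b v p f) := by
  refine ⟨0, fun c hc => ?_⟩
  obtain ⟨q₁, _, q₂, _, rfl⟩ := hc
  have := n1_nonneg (p - q₁)
  have := n1_nonneg (q₂ - f)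
  have := div_nonneg (n2_nonneg (q₁ - q₂)) hv.le
  linarith

lemma PS_nonneg (a b : ℝ × ℝ) {v : ℝ} (hv : 0 < v) (p f : ℝ × ℝ) :
    ∀ c ∈ PS a b v p f, 0 ≤ c := by
  intro c hc
  obtain ⟨q₁, _, q₂, _, rfl⟩ := hc
  have := n1_nonneg (p - q₁)
  have := n1_nonneg (q₂ - f)
  have := div_nonneg (n2_nonneg (q₁ - q₂)) hv.le
  linarith

lemma dfree_nonneg (a b : ℝ × ℝ) {v : ℝ} (hv : 0 < v) (p f : ℝ × ℝ) :
    0 ≤ dfree a b v p f := by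
  rw [dfree_eq]
  exact le_min (n1_nonneg _) (le_csInf (PS_nonempty a b v p f) (PS_nonneg a b hv p f))

lemma dfree_le_direct (a b : ℝ × ℝ) (v : ℝ) (p f : ℝ × ℝ) :
    dfree a b v p f ≤ n1 (p - f) := min_le_left _ _

lemma dfree_le_path (a b : ℝ × ℝ) {v : ℝ} (hv : 0 < v) (p f : ℝ × ℝ)
    {q₁ q₂ : ℝ × ℝ} (h₁ : q₁ ∈ segment ℝ a b) (h₂ : q₂ ∈ segment ℝ a b) :
    dfree a b v p f ≤ n1 (p - q₁) + n2 (q₁ - q₂) / v + n1 (q₂ - f) := by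
  rw [dfree_eq]
  exact (min_le_right _ _).trans (csInf_le (PS_bddBelow a b hv p f) ⟨q₁, h₁, q₂, h₂, rfl⟩)

lemma dfree_lower (a b : ℝ × ℝ) {v : ℝ} (hv : 1 < v) (p f : ℝ × ℝ) :
    n2 (p - f) / v ≤ dfree a b v p f := by
  have hv0 : (0:ℝ) < v := lt_trans one_pos hv
  rw [dfree_eq]
  apply le_min
  · exact (div_le_self (n2_nonneg _) hv.le).trans (n2_le_n1 _)
  · apply le_csInf (PS_nonempty a b v p f)
    rintro c ⟨q₁, _, q₂, _, rfl⟩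
    have htri : n2 (p - f) ≤ n2 (p - q₁) + n2 (q₁ - q₂) + n2 (q₂ - f) := by
      have h1 : p - f = (p - q₁) + ((q₁ - q₂) + (q₂ - f)) := by abel
      calc n2 (p - f) = n2 ((p - q₁) + ((q₁ - q₂) + (q₂ - f))) := by rw [← h1]
        _ ≤ n2 (p - q₁) + n2 ((q₁ - q₂) + (q₂ - f)) := n2_triangle _ _
        _ ≤ n2 (p - q₁) + (n2 (q₁ - q₂) + n2 (q₂ - f)) := by
            have := n2_triangle (q₁ - q₂) (q₂ - f); linarith
        _ = n2 (p - q₁) + n2 (q₁ - q₂) + n2 (q₂ - f) := by ring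
    have e1 : n2 (p - q₁) / v ≤ n1 (p - q₁) :=
      (div_le_self (n2_nonneg _) hv.le).trans (n2_le_n1 _)
    have e3 : n2 (q₂ - f) / v ≤ n1 (q₂ - f) :=
      (div_le_self (n2_nonneg _) hv.le).trans (n2_le_n1 _)
    have hd : n2 (p - f) / v ≤ n2 (p - q₁) / v + n2 (q₁ - q₂) / v + n2 (q₂ - f) / v := by
      rw [← add_div, ← add_div]
      gcongr
    linarith

/-! ### The exchange lemma -/

lemma ecc {σ₀ σ₂ θ : ℝ} (h : (σ₂ ≤ θ ∧ θ ≤ σ₀) ∨ (σ₀ ≤ θ ∧ θ ≤ σ₂)) :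
    ∃ c : ℝ, 0 ≤ c ∧ c ≤ 1 ∧ θ = c * σ₀ + (1 - c) * σ₂ := by
  by_cases he : σ₀ = σ₂
  · subst he
    have hθ : θ = σ₀ := by rcases h with ⟨h1, h2⟩ | ⟨h1, h2⟩ <;> linarith
    exact ⟨0, le_refl 0, zero_le_one, by rw [hθ]; ring⟩
  · rcases h with ⟨h1, h2⟩ | ⟨h1, h2⟩
    · have hlt : σ₂ < σ₀ := lt_of_le_of_ne (h1.trans h2) (fun hh => he hh.symm)
      have hne : σ₀ - σ₂ ≠ 0 := sub_ne_zero.mpr he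
      refine ⟨(θ - σ₂) / (σ₀ - σ₂), div_nonneg (by linarith) (by linarith), ?_, ?_⟩
      · rw [div_le_one (by linarith)]; linarith
      · field_simp
        ring
    · have hlt : σ₀ < σ₂ := lt_of_le_of_ne (h1.trans h2) he
      have hne : σ₂ - σ₀ ≠ 0 := sub_ne_zero.mpr (Ne.symm he)
      refine ⟨1 - (θ - σ₀) / (σ₂ - σ₀), ?_, ?_, ?_⟩
      · have : (θ - σ₀) / (σ₂ - σ₀) ≤ 1 := by rw [div_le_one (by linarith)]; linarith
        linarith
      · have : 0 ≤ (θ - σ₀) / (σ₂ - σ₀) := div_nonneg (by linarith) (by linarith)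
        linarith
      · field_simp
        ring

lemma continuous_n1 : Continuous n1 := by
  unfold n1
  exact (continuous_fst.abs).add (continuous_snd.abs)

lemma isCompact_seg (a b : ℝ × ℝ) : IsCompact (segment ℝ a b) := by
  rw [segment_eq_image' ℝ a b]
  exact isCompact_Icc.image (by continuity)

lemma exchange (a b f : ℝ × ℝ) {v : ℝ} (hv : 1 < v) :
    ∃ a₂ b₂ : ℝ × ℝ, a₂ - b₂ = a - b ∧ f ∈ segment ℝ a₂ b₂ ∧
      ∀ p, dfree a₂ b₂ v p f ≤ dfree a b v p f := by
  have hv0 : (0:ℝ) < v := lt_trans one_pos hv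
  obtain ⟨q, hq_mem, hq_min'⟩ := (isCompact_seg a b).exists_isMinOn
    ⟨a, left_mem_segment ℝ a b⟩
    ((continuous_n1.comp (continuous_id.sub continuous_const)).continuousOn)
  have hq_min : ∀ x ∈ segment ℝ a b, n1 (q - f) ≤ n1 (x - f) := fun x hx => hq_min' hx
  have hq_mem' := hq_mem
  rw [segment_eq_image' ℝ a b] at hq_mem'
  obtain ⟨σ₀, ⟨hσ₀0, hσ₀1⟩, hq0e⟩ := hq_mem'
  have hq0 : a + σ₀ • (b - a) = q := hq0e
  have hf_mem : f ∈ segment ℝ (a + (f - q)) (b + (f - q)) := by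
    rw [segment_eq_image']
    refine ⟨σ₀, ⟨hσ₀0, hσ₀1⟩, ?_⟩
    show a + (f - q) + σ₀ • (b + (f - q) - (a + (f - q))) = f
    rw [← hq0]
    refine Prod.ext ?_ ?_ <;>
      simp only [Prod.fst_add, Prod.snd_add, Prod.fst_sub, Prod.snd_sub,
        Prod.smul_fst, Prod.smul_snd, smul_eq_mul] <;> ring
  refine ⟨a + (f - q), b + (f - q), by abel, hf_mem, fun p => ?_⟩
  rw [dfree_eq, dfree_eq]
  apply le_min
  · exact min_le_left _ _
  · apply le_csInf (PS_nonempty a b v p f)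
    rintro c ⟨q₁, hq₁, q₂, hq₂, rfl⟩
    have hq₂copy := hq₂
    rw [segment_eq_image' ℝ a b] at hq₁ hq₂
    obtain ⟨σ₁, ⟨hσ₁0, hσ₁1⟩, hq1e⟩ := hq₁
    obtain ⟨σ₂, ⟨hσ₂0, hσ₂1⟩, hq2e⟩ := hq₂
    have hq1 : a + σ₁ • (b - a) = q₁ := hq1e
    have hq2 : a + σ₂ • (b - a) = q₂ := hq2e
    set u := σ₀ + σ₁ - σ₂ with hu
    set τ := max 0 (min 1 u) with hτdef
    set θ := σ₀ + σ₁ - τ with hθdef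
    have hτ_cases : (u ≤ 0 ∧ τ = 0) ∨ (1 ≤ u ∧ τ = 1) ∨ (0 ≤ u ∧ u ≤ 1 ∧ τ = u) := by
      rcases le_total u 0 with h | h
      · exact Or.inl ⟨h, by rw [hτdef, max_eq_left ((min_le_right 1 u).trans h)]⟩
      · rcases le_total 1 u with h1 | h1
        · exact Or.inr (Or.inl ⟨h1, by rw [hτdef, min_eq_left h1, max_eq_right zero_le_one]⟩)
        · exact Or.inr (Or.inr ⟨h, h1, by rw [hτdef, min_eq_right h1, max_eq_right h]⟩)
    have hτ0 : 0 ≤ τ := le_max_left 0 _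
    have hτ1 : τ ≤ 1 := by
      rcases hτ_cases with ⟨_, h⟩ | ⟨_, h⟩ | ⟨_, h', h⟩ <;> rw [h] <;> linarith
    have habs : |τ - σ₀| ≤ |σ₁ - σ₂| := by
      have A := le_abs_self (σ₁ - σ₂)
      have B := neg_abs_le (σ₁ - σ₂)
      apply abs_le.mpr
      rcases hτ_cases with ⟨h, he⟩ | ⟨h, he⟩ | ⟨h0, h1, he⟩ <;> rw [he] <;>
        constructor <;> simp only [hu] at * <;> linarith
    have hbet : (σ₂ ≤ θ ∧ θ ≤ σ₀) ∨ (σ₀ ≤ θ ∧ θ ≤ σ₂) := by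
      rcases hτ_cases with ⟨h, he⟩ | ⟨h, he⟩ | ⟨h0, h1, he⟩
      · refine Or.inr ⟨?_, ?_⟩ <;> rw [hθdef, he] <;> simp only [hu] at h <;> linarith
      · refine Or.inl ⟨?_, ?_⟩ <;> rw [hθdef, he] <;> simp only [hu] at h <;> linarith
      · have hθσ₂ : θ = σ₂ := by rw [hθdef, he, hu]; ring
        rcases le_total σ₀ σ₂ with hc | hc
        · exact Or.inr ⟨by rw [hθσ₂]; exact hc, le_of_eq hθσ₂⟩
        · exact Or.inl ⟨le_of_eq hθσ₂.symm, by rw [hθσ₂]; exact hc⟩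
    set z := f + (τ - σ₀) • (b - a) with hzdef
    have hz_mem : z ∈ segment ℝ (a + (f - q)) (b + (f - q)) := by
      rw [segment_eq_image']
      refine ⟨τ, ⟨hτ0, hτ1⟩, ?_⟩
      show a + (f - q) + τ • (b + (f - q) - (a + (f - q))) = z
      rw [hzdef, ← hq0]
      refine Prod.ext ?_ ?_ <;>
        simp only [Prod.fst_add, Prod.snd_add, Prod.fst_sub, Prod.snd_sub,
          Prod.smul_fst, Prod.smul_snd, smul_eq_mul] <;> ring
    have step1 : min (n1 (p - f)) (sInf (PS (a + (f - q)) (b + (f - q)) v p f)) ≤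
        n1 (p - z) + n2 (z - f) / v + n1 (f - f) :=
      (min_le_right _ _).trans (csInf_le (PS_bddBelow _ _ hv0 p f) ⟨z, hz_mem, f, hf_mem, rfl⟩)
    have hff : n1 (f - f) = 0 := by rw [sub_self]; exact n1_zero
    have hzf : z - f = (τ - σ₀) • (b - a) := by rw [hzdef]; abel
    have hq12 : q₁ - q₂ = (σ₁ - σ₂) • (b - a) := by
      rw [← hq1, ← hq2]
      refine Prod.ext ?_ ?_ <;>
        simp only [Prod.fst_add, Prod.snd_add, Prod.fst_sub, Prod.snd_sub,
          Prod.smul_fst, Prod.smul_snd, smul_eq_mul] <;> ring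
    have hride : n2 (z - f) ≤ n2 (q₁ - q₂) := by
      rw [hzf, hq12, n2_smul, n2_smul]
      exact mul_le_mul_of_nonneg_right habs (n2_nonneg _)
    have hentry : n1 (p - z) ≤ n1 (p - q₁) + n1 (q₁ - z) := by
      have h1 : p - z = (p - q₁) + (q₁ - z) := by abel
      rw [h1]; exact n1_triangle _ _
    have hwalk : n1 (q₁ - z) ≤ n1 (q₂ - f) := by
      have hqz : q₁ - z = a + θ • (b - a) - f := by
        rw [← hq1, hzdef]
        refine Prod.ext ?_ ?_ <;>
          simp only [hθdef, Prod.fst_add, Prod.snd_add, Prod.fst_sub, Prod.snd_sub,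
            Prod.smul_fst, Prod.smul_snd, smul_eq_mul] <;> ring
      obtain ⟨c, hc0, hc1, hcθ⟩ := ecc hbet
      have hiden : a + θ • (b - a) - f =
          c • (a + σ₀ • (b - a) - f) + (1 - c) • (a + σ₂ • (b - a) - f) := by
        rw [hcθ]
        refine Prod.ext ?_ ?_ <;>
          simp only [Prod.fst_add, Prod.snd_add, Prod.fst_sub, Prod.snd_sub,
            Prod.smul_fst, Prod.smul_snd, smul_eq_mul] <;> ring
      have htri := n1_triangle (c • (a + σ₀ • (b - a) - f)) ((1 - c) • (a + σ₂ • (b - a) - f))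
      rw [n1_smul, n1_smul, abs_of_nonneg hc0,
        abs_of_nonneg (by linarith : (0:ℝ) ≤ 1 - c)] at htri
      have hmin : n1 (a + σ₀ • (b - a) - f) ≤ n1 (a + σ₂ • (b - a) - f) := by
        rw [hq0, hq2]
        exact hq_min q₂ hq₂copy
      have hmul : c * n1 (a + σ₀ • (b - a) - f) ≤ c * n1 (a + σ₂ • (b - a) - f) :=
        mul_le_mul_of_nonneg_left hmin hc0
      calc n1 (q₁ - z) = n1 (c • (a + σ₀ • (b - a) - f) + (1 - c) • (a + σ₂ • (b - a) - f)) := by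
            rw [hqz, hiden]
        _ ≤ c * n1 (a + σ₀ • (b - a) - f) + (1 - c) * n1 (a + σ₂ • (b - a) - f) := htri
        _ ≤ c * n1 (a + σ₂ • (b - a) - f) + (1 - c) * n1 (a + σ₂ • (b - a) - f) := by linarith
        _ = n1 (a + σ₂ • (b - a) - f) := by ring
        _ = n1 (q₂ - f) := by rw [hq2]
    have hdiv : n2 (z - f) / v ≤ n2 (q₁ - q₂) / v := by gcongr
    linarith
/-! ### Continuity -/

noncomputable def LL (v : ℝ) (p : ℝ × ℝ) (y : (ℝ × ℝ) × (ℝ × ℝ) × (ℝ × ℝ)) : ℝ :=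
  sInf (PS y.1 y.2.1 v p y.2.2)

lemma LL_le {v : ℝ} (hv : 1 < v) (p : ℝ × ℝ) (y y' : (ℝ × ℝ) × (ℝ × ℝ) × (ℝ × ℝ)) :
    LL v p y ≤ LL v p y' + 5 * (n1 (y.1 - y'.1) + n1 (y.2.1 - y'.2.1)) + n1 (y.2.2 - y'.2.2) := by
  have hv0 : (0:ℝ) < v := lt_trans one_pos hv
  obtain ⟨a, b, f⟩ := y
  obtain ⟨a', b', f'⟩ := y'
  simp only [LL]
  have hkey : ∀ c' ∈ PS a' b' v p f',
      sInf (PS a b v p f) ≤ c' + 5 * (n1 (a - a') + n1 (b - b')) + n1 (f - f') := by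
    rintro c' ⟨q₁', hq₁', q₂', hq₂', rfl⟩
    rw [segment_eq_image' ℝ a' b'] at hq₁' hq₂'
    obtain ⟨σ₁, ⟨hσ₁0, hσ₁1⟩, hq1e⟩ := hq₁'
    obtain ⟨σ₂, ⟨hσ₂0, hσ₂1⟩, hq2e⟩ := hq₂'
    have hq1 : a' + σ₁ • (b' - a') = q₁' := hq1e
    have hq2 : a' + σ₂ • (b' - a') = q₂' := hq2e
    set q₁ : ℝ × ℝ := a + σ₁ • (b - a) with hq₁def
    set q₂ : ℝ × ℝ := a + σ₂ • (b - a) with hq₂def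
    have hq₁mem : q₁ ∈ segment ℝ a b := by
      rw [segment_eq_image' ℝ a b]; exact ⟨σ₁, ⟨hσ₁0, hσ₁1⟩, rfl⟩
    have hq₂mem : q₂ ∈ segment ℝ a b := by
      rw [segment_eq_image' ℝ a b]; exact ⟨σ₂, ⟨hσ₂0, hσ₂1⟩, rfl⟩
    have step1 : sInf (PS a b v p f) ≤ n1 (p - q₁) + n2 (q₁ - q₂) / v + n1 (q₂ - f) :=
      csInf_le (PS_bddBelow a b hv0 p f) ⟨q₁, hq₁mem, q₂, hq₂mem, rfl⟩
    -- bound the three pieces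
    have hd1 : ∀ σ : ℝ, 0 ≤ σ → σ ≤ 1 →
        n1 ((a + σ • (b - a)) - (a' + σ • (b' - a'))) ≤ 2 * n1 (a - a') + n1 (b - b') := by
      intro σ h0 h1
      have hiden : (a + σ • (b - a)) - (a' + σ • (b' - a')) =
          (a - a') + σ • ((b - b') - (a - a')) := by
        refine Prod.ext ?_ ?_ <;>
          simp only [Prod.fst_add, Prod.snd_add, Prod.fst_sub, Prod.snd_sub,
            Prod.smul_fst, Prod.smul_snd, smul_eq_mul] <;> ring
      rw [hiden]
      have t1 := n1_triangle (a - a') (σ • ((b - b') - (a - a')))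
      have t2 : n1 (σ • ((b - b') - (a - a'))) ≤ n1 ((b - b') - (a - a')) := by
        rw [n1_smul, abs_of_nonneg h0]
        nlinarith [n1_nonneg ((b - b') - (a - a'))]
      have t3 : n1 ((b - b') - (a - a')) ≤ n1 (b - b') + n1 (a - a') := by
        have h := n1_triangle (b - b') (-(a - a'))
        rw [n1_neg] at h
        have : (b - b') - (a - a') = (b - b') + -(a - a') := by abel
        rw [this]; exact h
      linarith
    have hentry : n1 (p - q₁) ≤ n1 (p - q₁') + (2 * n1 (a - a') + n1 (b - b')) := by
      have h1 : p - q₁ = (p - q₁') + (q₁' - q₁) := by abel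
      have h2 := n1_triangle (p - q₁') (q₁' - q₁)
      have h3 : n1 (q₁' - q₁) ≤ 2 * n1 (a - a') + n1 (b - b') := by
        have hsym : q₁' - q₁ = -(q₁ - q₁') := by abel
        rw [hsym, n1_neg, hq₁def, ← hq1]
        exact hd1 σ₁ hσ₁0 hσ₁1
      rw [h1]
      linarith
    have hexit : n1 (q₂ - f) ≤ n1 (q₂' - f') +
        (2 * n1 (a - a') + n1 (b - b')) + n1 (f - f') := by
      have h1 : q₂ - f = (q₂' - f') + ((q₂ - q₂') + (f' - f)) := by abel
      have h2 := n1_triangle (q₂' - f') ((q₂ - q₂') + (f' - f))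
      have h2' := n1_triangle (q₂ - q₂') (f' - f)
      have h3 : n1 (q₂ - q₂') ≤ 2 * n1 (a - a') + n1 (b - b') := by
        rw [hq₂def, ← hq2]
        exact hd1 σ₂ hσ₂0 hσ₂1
      have h4 : n1 (f' - f) = n1 (f - f') := by
        rw [show f' - f = -(f - f') by abel, n1_neg]
      rw [h1]
      linarith
    have hride : n2 (q₁ - q₂) / v ≤ n2 (q₁' - q₂') / v + (n1 (a - a') + n1 (b - b')) := by
      have hab : q₁ - q₂ = (σ₁ - σ₂) • (b - a) := by
        rw [hq₁def, hq₂def]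
        refine Prod.ext ?_ ?_ <;>
          simp only [Prod.fst_add, Prod.snd_add, Prod.fst_sub, Prod.snd_sub,
            Prod.smul_fst, Prod.smul_snd, smul_eq_mul] <;> ring
      have hab' : q₁' - q₂' = (σ₁ - σ₂) • (b' - a') := by
        rw [← hq1, ← hq2]
        refine Prod.ext ?_ ?_ <;>
          simp only [Prod.fst_add, Prod.snd_add, Prod.fst_sub, Prod.snd_sub,
            Prod.smul_fst, Prod.smul_snd, smul_eq_mul] <;> ring
      have hσ12 : |σ₁ - σ₂| ≤ 1 := by
        apply abs_le.mpr; constructor <;> linarith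
      have t1 : n2 (q₁ - q₂) ≤ n2 (q₁' - q₂') + (n2 (a - a') + n2 (b - b')) := by
        rw [hab, hab', n2_smul, n2_smul]
        have t2 : n2 (b - a) ≤ n2 (b' - a') + (n2 (a - a') + n2 (b - b')) := by
          have hi : b - a = (b' - a') + ((b - b') + (a' - a)) := by abel
          have u1 := n2_triangle (b' - a') ((b - b') + (a' - a))
          have u2 := n2_triangle (b - b') (a' - a)
          have u3 : n2 (a' - a) = n2 (a - a') := by
            rw [show a' - a = (-1 : ℝ) • (a - a') by
              refine Prod.ext ?_ ?_ <;>
                simp only [Prod.fst_sub, Prod.snd_sub, Prod.smul_fst, Prod.smul_snd,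
                  smul_eq_mul] <;> ring, n2_smul]
            simp
          rw [hi]
          linarith
        calc |σ₁ - σ₂| * n2 (b - a) ≤ |σ₁ - σ₂| * (n2 (b' - a') + (n2 (a - a') + n2 (b - b'))) :=
              mul_le_mul_of_nonneg_left t2 (abs_nonneg _)
          _ ≤ |σ₁ - σ₂| * n2 (b' - a') + (n2 (a - a') + n2 (b - b')) := by
              nlinarith [n2_nonneg (a - a'), n2_nonneg (b - b'), abs_nonneg (σ₁ - σ₂)]
      have t3 : n2 (q₁ - q₂) / v ≤ (n2 (q₁' - q₂') + (n2 (a - a') + n2 (b - b'))) / v := by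
        gcongr
      have t4 : (n2 (q₁' - q₂') + (n2 (a - a') + n2 (b - b'))) / v =
          n2 (q₁' - q₂') / v + (n2 (a - a') + n2 (b - b')) / v := by ring
      have t5 : (n2 (a - a') + n2 (b - b')) / v ≤ n2 (a - a') + n2 (b - b') :=
        div_le_self (add_nonneg (n2_nonneg _) (n2_nonneg _)) hv.le
      have t6 : n2 (a - a') ≤ n1 (a - a') := n2_le_n1 _
      have t7 : n2 (b - b') ≤ n1 (b - b') := n2_le_n1 _
      rw [t4] at t3
      linarith
    have := n1_nonneg (a - a')
    have := n1_nonneg (b - b')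
    have := n1_nonneg (f - f')
    linarith
  have hne := PS_nonempty a' b' v p f'
  -- conclude
  have : sInf (PS a b v p f) - (5 * (n1 (a - a') + n1 (b - b')) + n1 (f - f')) ≤
      sInf (PS a' b' v p f') := by
    apply le_csInf hne
    intro c' hc'
    have := hkey c' hc'
    linarith
  linarith

lemma dist_fst_le' (x y : (ℝ × ℝ) × (ℝ × ℝ) × (ℝ × ℝ)) : dist x.1 y.1 ≤ dist x y := by
  rw [Prod.dist_eq]; exact le_max_left _ _

lemma dist_snd_fst_le' (x y : (ℝ × ℝ) × (ℝ × ℝ) × (ℝ × ℝ)) : dist x.2.1 y.2.1 ≤ dist x y := by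
  rw [Prod.dist_eq, Prod.dist_eq]
  exact le_max_of_le_right (le_max_left _ _)

lemma dist_snd_snd_le' (x y : (ℝ × ℝ) × (ℝ × ℝ) × (ℝ × ℝ)) : dist x.2.2 y.2.2 ≤ dist x y := by
  rw [Prod.dist_eq, Prod.dist_eq]
  exact le_max_of_le_right (le_max_right _ _)

lemma LL_lip {v : ℝ} (hv : 1 < v) (p : ℝ × ℝ) (y y' : (ℝ × ℝ) × (ℝ × ℝ) × (ℝ × ℝ)) :
    LL v p y ≤ LL v p y' + 22 * dist y y' := by
  have h := LL_le hv p y y'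
  have b1 : n1 (y.1 - y'.1) ≤ 2 * dist y y' :=
    (n1_le_two_dist _ _).trans (by have := dist_fst_le' y y'; linarith)
  have b2 : n1 (y.2.1 - y'.2.1) ≤ 2 * dist y y' :=
    (n1_le_two_dist _ _).trans (by have := dist_snd_fst_le' y y'; linarith)
  have b3 : n1 (y.2.2 - y'.2.2) ≤ 2 * dist y y' :=
    (n1_le_two_dist _ _).trans (by have := dist_snd_snd_le' y y'; linarith)
  have := n1_nonneg (y.1 - y'.1)
  have := n1_nonneg (y.2.1 - y'.2.1)
  have := n1_nonneg (y.2.2 - y'.2.2)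
  linarith

lemma LL_cont {v : ℝ} (hv : 1 < v) (p : ℝ × ℝ) : Continuous (LL v p) := by
  rw [Metric.continuous_iff]
  intro y ε hε
  refine ⟨ε / 23, by positivity, fun y' hy' => ?_⟩
  have h1 := LL_lip hv p y y'
  have h2 := LL_lip hv p y' y
  rw [dist_comm y' y] at *
  rw [Real.dist_eq, abs_lt]
  have hd : (0:ℝ) ≤ dist y y' := dist_nonneg
  constructor <;> nlinarith

lemma continuous_n2 : Continuous n2 := by
  unfold n2
  exact Real.continuous_sqrt.comp (by continuity)

lemma dfree_cont {v : ℝ} (hv : 1 < v) (p : ℝ × ℝ) :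
    Continuous (fun y : (ℝ × ℝ) × (ℝ × ℝ) × (ℝ × ℝ) => dfree y.1 y.2.1 v p y.2.2) := by
  have heq : (fun y : (ℝ × ℝ) × (ℝ × ℝ) × (ℝ × ℝ) => dfree y.1 y.2.1 v p y.2.2) =
      fun y => min (n1 (p - y.2.2)) (LL v p y) := by
    funext y
    rw [dfree_eq]
    rfl
  rw [heq]
  exact Continuous.min
    (continuous_n1.comp (continuous_const.sub (continuous_snd.comp continuous_snd)))
    (LL_cont hv p)

lemma continuous_finset_sup' {ι : Type*} {X : Type*} [TopologicalSpace X]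
    (F : ι → X → ℝ) (hF : ∀ i, Continuous (F i)) (S : Finset ι) (hS : S.Nonempty) :
    Continuous fun x => S.sup' hS (fun i => F i x) := by
  induction hS using Finset.Nonempty.cons_induction with
  | singleton a => simpa using hF a
  | cons a s h hs ih =>
    have heq : (fun x => (Finset.cons a s h).sup' (Finset.cons_nonempty h) (fun i => F i x)) =
        fun x => max (F a x) (s.sup' hs (fun i => F i x)) := by
      funext x
      rw [Finset.sup'_cons]
    rw [heq]
    exact (hF a).max ih

/-! ### Main theorem -/

theorem stmt12 (S : Finset (ℝ × ℝ)) (hS : S.Nonempty) (v ℓ : ℝ) (hv : 1 < v)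
    (hℓ : 0 < ℓ) :
    ∃ a b f : ℝ × ℝ, n2 (a - b) = ℓ ∧ f ∈ segment ℝ a b ∧
      ∀ a' b' f' : ℝ × ℝ, n2 (a' - b') = ℓ →
        S.sup' hS (fun p => dfree a b v p f) ≤
          S.sup' hS (fun p => dfree a' b' v p f') := by
  classical
  have hv0 : (0:ℝ) < v := lt_trans one_pos hv
  obtain ⟨p₀, hp₀⟩ := hS
  set a₀ : ℝ × ℝ := p₀ with ha₀def
  set b₀ : ℝ × ℝ := p₀ + (ℓ, 0) with hb₀def
  have hab₀ : n2 (a₀ - b₀) = ℓ := by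
    have h1 : a₀ - b₀ = (-ℓ, 0) := by
      rw [ha₀def, hb₀def]
      refine Prod.ext ?_ ?_ <;>
        simp only [Prod.fst_add, Prod.snd_add, Prod.fst_sub, Prod.snd_sub] <;> ring
    rw [h1, n2]
    simp only
    rw [show (-ℓ) ^ 2 + (0:ℝ) ^ 2 = ℓ ^ 2 by ring]
    exact Real.sqrt_sq hℓ.le
  set V₀ : ℝ := S.sup' ⟨p₀, hp₀⟩ (fun p => dfree a₀ b₀ v p p₀) with hV₀def
  have hV₀ : 0 ≤ V₀ :=
    le_trans (dfree_nonneg a₀ b₀ hv0 p₀ p₀)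
      (Finset.le_sup' (fun p => dfree a₀ b₀ v p p₀) hp₀)
  set R : ℝ := v * V₀ + 1 with hRdef
  have hR : 0 ≤ R := by nlinarith
  set φ : (ℝ × ℝ) × (ℝ × ℝ) × ℝ → ℝ × ℝ := fun x => x.1 + x.2.2 • (x.2.1 - x.1) with hφdef
  have hφc : Continuous φ := by
    apply Continuous.add continuous_fst
    exact Continuous.smul (continuous_snd.comp continuous_snd)
      ((continuous_fst.comp continuous_snd).sub continuous_fst)
  set K : Set ((ℝ × ℝ) × (ℝ × ℝ) × ℝ) :=
    (fun x : (ℝ × ℝ) × (ℝ × ℝ) × ℝ => n2 (x.1 - x.2.1)) ⁻¹' {ℓ} ∩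
      ((fun x : (ℝ × ℝ) × (ℝ × ℝ) × ℝ => x.2.2) ⁻¹' Set.Icc (0:ℝ) 1 ∩
        φ ⁻¹' Metric.closedBall p₀ R) with hKdef
  have hn2c : Continuous fun x : (ℝ × ℝ) × (ℝ × ℝ) × ℝ => n2 (x.1 - x.2.1) :=
    continuous_n2.comp (continuous_fst.sub (continuous_fst.comp continuous_snd))
  have hKclosed : IsClosed K :=
    (isClosed_singleton.preimage hn2c).inter
      ((isClosed_Icc.preimage (continuous_snd.comp continuous_snd)).inter
        (Metric.isClosed_closedBall.preimage hφc))
  have hKsub : K ⊆ (Metric.closedBall p₀ (R + ℓ)) ×ˢ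
      ((Metric.closedBall p₀ (R + ℓ)) ×ˢ (Set.Icc (0:ℝ) 1)) := by
    rintro ⟨a, b, s⟩ ⟨h1, h2, h3⟩
    simp only [Set.mem_preimage, Set.mem_singleton_iff] at h1
    simp only [Set.mem_preimage, Set.mem_Icc] at h2
    simp only [Set.mem_preimage, Metric.mem_closedBall] at h3
    have hφx : φ (a, b, s) = a + s • (b - a) := rfl
    have hda : dist a (φ (a, b, s)) ≤ ℓ := by
      rw [hφx]
      have h4 : a - (a + s • (b - a)) = (-s) • (b - a) := by
        refine Prod.ext ?_ ?_ <;>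
          simp only [Prod.fst_add, Prod.snd_add, Prod.fst_sub, Prod.snd_sub,
            Prod.smul_fst, Prod.smul_snd, smul_eq_mul] <;> ring
      have h5 : n2 (b - a) = ℓ := by
        rw [show b - a = (-1 : ℝ) • (a - b) by
          refine Prod.ext ?_ ?_ <;>
            simp only [Prod.fst_sub, Prod.snd_sub, Prod.smul_fst, Prod.smul_snd,
              smul_eq_mul] <;> ring, n2_smul]
        simpa using h1
      calc dist a (φ (a, b, s)) ≤ n2 (a - φ (a, b, s)) := dist_le_n2 _ _
        _ = n2 ((-s) • (b - a)) := by rw [hφx, h4]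
        _ = |(-s)| * ℓ := by rw [n2_smul, h5]
        _ ≤ 1 * ℓ := by
            apply mul_le_mul_of_nonneg_right _ hℓ.le
            rw [abs_le]; constructor <;> linarith [h2.1, h2.2]
        _ = ℓ := one_mul ℓ
    have hdb : dist b (φ (a, b, s)) ≤ ℓ := by
      rw [hφx]
      have h4 : b - (a + s • (b - a)) = (1 - s) • (b - a) := by
        refine Prod.ext ?_ ?_ <;>
          simp only [Prod.fst_add, Prod.snd_add, Prod.fst_sub, Prod.snd_sub,
            Prod.smul_fst, Prod.smul_snd, smul_eq_mul] <;> ring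
      have h5 : n2 (b - a) = ℓ := by
        rw [show b - a = (-1 : ℝ) • (a - b) by
          refine Prod.ext ?_ ?_ <;>
            simp only [Prod.fst_sub, Prod.snd_sub, Prod.smul_fst, Prod.smul_snd,
              smul_eq_mul] <;> ring, n2_smul]
        simpa using h1
      calc dist b (φ (a, b, s)) ≤ n2 (b - φ (a, b, s)) := dist_le_n2 _ _
        _ = n2 ((1 - s) • (b - a)) := by rw [hφx, h4]
        _ = |1 - s| * ℓ := by rw [n2_smul, h5]
        _ ≤ 1 * ℓ := by
            apply mul_le_mul_of_nonneg_right _ hℓ.le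
            rw [abs_le]; constructor <;> linarith [h2.1, h2.2]
        _ = ℓ := one_mul ℓ
    refine ⟨?_, ?_, h2⟩
    · simp only [Metric.mem_closedBall]
      calc dist a p₀ ≤ dist a (φ (a, b, s)) + dist (φ (a, b, s)) p₀ := dist_triangle _ _ _
        _ ≤ ℓ + R := add_le_add hda h3
        _ = R + ℓ := by ring
    · simp only [Metric.mem_closedBall]
      calc dist b p₀ ≤ dist b (φ (a, b, s)) + dist (φ (a, b, s)) p₀ := dist_triangle _ _ _
        _ ≤ ℓ + R := add_le_add hdb h3
        _ = R + ℓ := by ring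
  have hKbounded : Bornology.IsBounded K :=
    Bornology.IsBounded.subset
      ((Metric.isBounded_closedBall).prod
        ((Metric.isBounded_closedBall).prod (Metric.isBounded_Icc 0 1))) hKsub
  have hKcompact : IsCompact K := Metric.isCompact_of_isClosed_isBounded hKclosed hKbounded
  have hx₀K : (a₀, b₀, (0:ℝ)) ∈ K := by
    refine ⟨?_, ?_, ?_⟩
    · simp only [Set.mem_preimage, Set.mem_singleton_iff]
      exact hab₀
    · simp only [Set.mem_preimage, Set.mem_Icc]
      exact ⟨le_refl 0, zero_le_one⟩
    · simp only [Set.mem_preimage, Metric.mem_closedBall]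
      have : φ (a₀, b₀, (0:ℝ)) = a₀ := by
        rw [hφdef]
        simp
      rw [this, ha₀def]
      simp [hR]
  have hKne : K.Nonempty := ⟨(a₀, b₀, 0), hx₀K⟩
  set G : (ℝ × ℝ) × (ℝ × ℝ) × ℝ → ℝ :=
    fun x => S.sup' ⟨p₀, hp₀⟩ (fun p => dfree x.1 x.2.1 v p (φ x)) with hGdef
  have hGc : Continuous G := by
    rw [hGdef]
    apply continuous_finset_sup'
      (fun p x => dfree x.1 x.2.1 v p (φ x))
    intro p
    have hmap : Continuous fun x : (ℝ × ℝ) × (ℝ × ℝ) × ℝ => (x.1, x.2.1, φ x) :=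
      continuous_fst.prodMk ((continuous_fst.comp continuous_snd).prodMk hφc)
    exact (dfree_cont hv p).comp hmap
  obtain ⟨xm, hxmK, hxmin'⟩ := hKcompact.exists_isMinOn hKne hGc.continuousOn
  have hxmin : ∀ y ∈ K, G xm ≤ G y := fun y hy => hxmin' hy
  obtain ⟨hxm1, hxm2, hxm3⟩ := hxmK
  simp only [Set.mem_preimage, Set.mem_singleton_iff] at hxm1
  simp only [Set.mem_preimage, Set.mem_Icc] at hxm2
  refine ⟨xm.1, xm.2.1, φ xm, hxm1, ?_, ?_⟩
  · rw [segment_eq_image' ℝ xm.1 xm.2.1]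
    exact ⟨xm.2.2, hxm2, rfl⟩
  · intro a' b' f' hab'
    set r' := S.sup' ⟨p₀, hp₀⟩ (fun p => dfree a' b' v p f') with hr'def
    rcases le_total V₀ r' with hcase | hcase
    · have h1 := hxmin (a₀, b₀, 0) hx₀K
      have h2 : G (a₀, b₀, (0:ℝ)) = V₀ := by
        rw [hGdef, hV₀def]
        apply Finset.sup'_congr _ rfl
        intro p _
        have : φ (a₀, b₀, (0:ℝ)) = p₀ := by rw [hφdef]; simp [ha₀def]
        rw [this]
      calc G xm ≤ G (a₀, b₀, 0) := h1
        _ = V₀ := h2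
        _ ≤ r' := hcase
    · obtain ⟨a₂, b₂, hdiff, hfmem, hdom⟩ := exchange a' b' f' hv
      have hlow : n2 (p₀ - f') / v ≤ r' :=
        (dfree_lower a' b' hv p₀ f').trans
          (Finset.le_sup' (fun p => dfree a' b' v p f') hp₀)
      have hball : f' ∈ Metric.closedBall p₀ R := by
        simp only [Metric.mem_closedBall]
        have h1 : n2 (p₀ - f') ≤ v * r' := by
          rw [div_le_iff₀ hv0] at hlow
          linarith [hlow]
        have h2 : dist f' p₀ ≤ n2 (f' - p₀) := dist_le_n2 _ _
        have h3 : n2 (f' - p₀) = n2 (p₀ - f') := by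
          rw [show f' - p₀ = (-1 : ℝ) • (p₀ - f') by
            refine Prod.ext ?_ ?_ <;>
              simp only [Prod.fst_sub, Prod.snd_sub, Prod.smul_fst, Prod.smul_snd,
                smul_eq_mul] <;> ring, n2_smul]
          simp
        have h4 : v * r' ≤ v * V₀ := mul_le_mul_of_nonneg_left hcase hv0.le
        rw [hRdef]
        linarith
      have hfmem' := hfmem
      rw [segment_eq_image' ℝ a₂ b₂] at hfmem'
      obtain ⟨s, hs, hse⟩ := hfmem'
      have hse' : a₂ + s • (b₂ - a₂) = f' := hse
      have hK₂ : (a₂, b₂, s) ∈ K := by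
        refine ⟨?_, ?_, ?_⟩
        · simp only [Set.mem_preimage, Set.mem_singleton_iff]
          rw [show (a₂, b₂, s).1 - (a₂, b₂, s).2.1 = a₂ - b₂ from rfl, hdiff]
          exact hab'
        · simp only [Set.mem_preimage, Set.mem_Icc]
          exact hs
        · simp only [Set.mem_preimage]
          have : φ (a₂, b₂, s) = f' := by rw [hφdef]; exact hse'
          rw [this]
          exact hball
      have h1 := hxmin (a₂, b₂, s) hK₂
      have h2 : G (a₂, b₂, s) ≤ r' := by
        rw [hGdef, hr'def]
        apply Finset.sup'_le
        intro p hp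
        have : φ (a₂, b₂, s) = f' := by rw [hφdef]; exact hse'
        rw [show ((a₂, b₂, s) : (ℝ × ℝ) × (ℝ × ℝ) × ℝ).1 = a₂ from rfl,
          show ((a₂, b₂, s) : (ℝ × ℝ) × (ℝ × ℝ) × ℝ).2.1 = b₂ from rfl, this]
        exact (hdom p).trans (Finset.le_sup' (fun p => dfree a' b' v p f') hp)
      exact h1.trans h2
end

section
/- Let h be a freeway segment of speed v > 1 with slope angle α ∈ [0, π/4] passing through the facility f, and let p be a point strictly above the line of h with x(p) between the x-coordinates of f and the upper endpoint of h. If α > φ_v = π/4 − arcsin(√2/(2v)), then entering the freeway at the vertical projection p′ of p is at least as fast as entering at any other point q of h: ‖p − p′‖₁ + ‖p′ − f‖₂/v ≤ ‖p − q‖₁ + ‖q − f‖₂/v for all q ∈ h between f and the endpoint above p. -/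
lemma aux15 (u s Y c sn v : ℝ) (hc : 0 < c) (hb : |1/v - sn| ≤ c) :
    (Y - u*sn) + u * (1/v) ≤ |u*c - s*c| + |Y - s*sn| + s * (1/v) := by
  have h1 : (u - s)*(1/v - sn) ≤ |u - s| * c := by
    calc (u - s)*(1/v - sn) ≤ |(u - s)*(1/v - sn)| := le_abs_self _
      _ = |u - s| * |1/v - sn| := abs_mul _ _
      _ ≤ |u - s| * c := mul_le_mul_of_nonneg_left hb (abs_nonneg _)
  have h2 : |u*c - s*c| = |u - s| * c := by
    rw [← sub_mul, abs_mul, abs_of_pos hc]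
  have h3 : Y - s*sn ≤ |Y - s*sn| := le_abs_self _
  have e : (u - s)*(1/v - sn) = u*(1/v) - u*sn - s*(1/v) + s*sn := by ring
  rw [e] at h1
  rw [h2]
  linarith

set_option maxHeartbeats 1000000 in
theorem stmt15 (v α L : ℝ) (hv : 1 < v) (hα0 : 0 ≤ α) (hα1 : α ≤ Real.pi / 4)
    (hφ : Real.pi / 4 - Real.arcsin (Real.sqrt 2 / (2 * v)) < α)
    (hL : 0 < L) (f p : ℝ × ℝ)
    (e' : ℝ × ℝ) (he' : e' = f + L • (Real.cos α, Real.sin α))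
    (habove : f.2 + (p.1 - f.1) * Real.tan α < p.2)
    (hx1 : f.1 ≤ p.1) (hx2 : p.1 ≤ e'.1)
    (p' : ℝ × ℝ) (hp' : p' = (p.1, f.2 + (p.1 - f.1) * Real.tan α)) :
    ∀ q ∈ segment ℝ f e',
      n1 (p - p') + n2 (p' - f) / v ≤ n1 (p - q) + n2 (q - f) / v := by
  have hpi := Real.pi_pos
  have hc : 0 < Real.cos α := Real.cos_pos_of_mem_Ioo ⟨by linarith, by linarith⟩
  have hs0 : 0 ≤ Real.sin α := Real.sin_nonneg_of_nonneg_of_le_pi hα0 (by linarith)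
  have hsc : Real.sin α ≤ Real.cos α := by
    rw [← Real.cos_pi_div_two_sub]
    exact Real.cos_le_cos_of_nonneg_of_le_pi hα0 (by linarith) (by linarith)
  have hsum : 1 ≤ Real.sin α + Real.cos α := by
    nlinarith [Real.sin_sq_add_cos_sq α, hs0, hc.le]
  have hv0 : (0:ℝ) < v := by linarith
  have hv1 : 1/v < 1 := by rw [div_lt_one hv0]; exact hv
  have hb : |1/v - Real.sin α| ≤ Real.cos α := by
    rw [abs_le]
    constructor
    · have : 0 < 1/v := by positivity
      linarith
    · linarith
  intro q hq
  rw [segment_eq_image'] at hq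
  obtain ⟨t, ⟨ht0, ht1⟩, rfl⟩ := hq
  set X : ℝ := p.1 - f.1 with hX
  set Y : ℝ := p.2 - f.2 with hY
  set s : ℝ := t * L with hs
  have hs0' : 0 ≤ s := mul_nonneg ht0 hL.le
  have hX0 : 0 ≤ X := by simp [hX]; linarith
  have hq1 : (f + t • (e' - f)).1 = f.1 + s * Real.cos α := by
    simp [he', hs]; ring
  have hq2 : (f + t • (e' - f)).2 = f.2 + s * Real.sin α := by
    simp [he', hs]; ring
  have htan : Real.tan α = Real.sin α / Real.cos α := Real.tan_eq_sin_div_cos α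
  -- compute n2 (p' - f)
  have hn2p' : n2 (p' - f) = X / Real.cos α := by
    rw [n2, hp']
    have h1 : ((p.1, f.2 + (p.1 - f.1) * Real.tan α) - f).1 = X := by simp [hX]
    have h2 : ((p.1, f.2 + (p.1 - f.1) * Real.tan α) - f).2 = X * Real.tan α := by
      simp [hX]
    rw [h1, h2, htan]
    have : X ^ 2 + (X * (Real.sin α / Real.cos α)) ^ 2
        = (X / Real.cos α) ^ 2 := by
      have h := Real.sin_sq_add_cos_sq α
      field_simp
      nlinarith [h]
    rw [this, Real.sqrt_sq (by positivity)]
  have hn2q : n2 (f + t • (e' - f) - f) = s := by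
    rw [n2]
    have h1 : (f + t • (e' - f) - f).1 = s * Real.cos α := by rw [Prod.fst_sub, hq1]; ring
    have h2 : (f + t • (e' - f) - f).2 = s * Real.sin α := by rw [Prod.snd_sub, hq2]; ring
    rw [h1, h2]
    have : (s * Real.cos α) ^ 2 + (s * Real.sin α) ^ 2 = s ^ 2 := by
      linear_combination s ^ 2 * Real.sin_sq_add_cos_sq α
    rw [this, Real.sqrt_sq hs0']
  have hn1p' : n1 (p - p') = Y - X * Real.tan α := by
    rw [n1, hp']
    have h1 : (p - (p.1, f.2 + (p.1 - f.1) * Real.tan α)).1 = 0 := by simp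
    have h2 : (p - (p.1, f.2 + (p.1 - f.1) * Real.tan α)).2
        = Y - X * Real.tan α := by simp [hX, hY]; ring
    rw [h1, h2, abs_zero, abs_of_pos (by simp only [hY, hX] at habove ⊢; linarith)]
    ring
  have hn1q : n1 (p - (f + t • (e' - f)))
      = |X - s * Real.cos α| + |Y - s * Real.sin α| := by
    have ha : (p - (f + t • (e' - f))).1 = X - s * Real.cos α := by
      rw [Prod.fst_sub, hq1]; simp only [hX]; ring
    have hb' : (p - (f + t • (e' - f))).2 = Y - s * Real.sin α := by
      rw [Prod.snd_sub, hq2]; simp only [hY]; ring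
    rw [n1, ha, hb']
  rw [hn1p', hn2p', hn1q, hn2q]
  have key := aux15 (X / Real.cos α) s Y (Real.cos α) (Real.sin α) v hc hb
  have e1 : X / Real.cos α * Real.cos α = X := by field_simp
  have e2 : X / Real.cos α * Real.sin α = X * Real.tan α := by
    rw [htan]; ring
  rw [e1, e2] at key
  have e3 : X / Real.cos α / v = X / Real.cos α * (1/v) := by ring
  have e4 : s / v = s * (1/v) := by ring
  rw [e3, e4]
  linarith
end
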